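/- arXiv:1203.1042 — 2 statements merged into one kernel-verified Lean document; each statement's English description precedes it below -/
import Mathlib

section
/- Sauer–Shelah lemma: if a family 𝓡 of subsets of a set X has VC dimension at most d, then for every finite A ⊆ X with |A| = n, the number of distinct sets A ∩ R with R ∈ 𝓡 is at most g(n,d) = Σ_{i=0}^{d} C(n, i). -/
/-- Sauer–Shelah lemma: if a family `𝓡` of subsets of `X` has VC dimension at
most `d` (no set of more than `d` points is shattered), then for every finite
`A ⊆ X`, the number of distinct traces `A ∩ R`, `R ∈ 𝓡`, is at most
`g(|A|, d) = Σ_{i=0}^{d} C(|A|, i)`. -/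
theorem stmt_8 {X : Type*} (𝓡 : Set (Set X)) (d : ℕ)
    (hVC : ∀ A : Finset X,
      (∀ Y ⊆ (A : Set X), ∃ r ∈ 𝓡, (A : Set X) ∩ r = Y) → A.card ≤ d)
    (A : Finset X) (n : ℕ) (hn : A.card = n) :
    Set.ncard {S : Set X | ∃ r ∈ 𝓡, S = (A : Set X) ∩ r} ≤
      ∑ i ∈ Finset.range (d + 1), n.choose i := by
  classical
  set 𝒜 : Finset (Finset X) :=
    A.powerset.filter (fun t => ∃ r ∈ 𝓡, (t : Set X) = (A : Set X) ∩ r) with h𝒜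
  have hset : {S : Set X | ∃ r ∈ 𝓡, S = (A : Set X) ∩ r}
      = (fun t : Finset X => (t : Set X)) '' ↑𝒜 := by
    ext S
    constructor
    · rintro ⟨r, hr, rfl⟩
      refine ⟨A.filter (· ∈ r), ?_, ?_⟩
      · simp only [h𝒜, Finset.coe_filter, Set.mem_setOf_eq, Finset.mem_filter,
          Finset.mem_powerset]
        refine ⟨Finset.filter_subset _ _, r, hr, ?_⟩
        ext x; simp [Set.mem_inter_iff]
      · ext x; simp [Set.mem_inter_iff]
    · rintro ⟨t, ht, rfl⟩
      simp only [h𝒜, Finset.coe_filter, Set.mem_setOf_eq, Finset.mem_powerset] at ht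
      obtain ⟨-, r, hr, h⟩ := ht
      exact ⟨r, hr, h⟩
  have hcard : Set.ncard {S : Set X | ∃ r ∈ 𝓡, S = (A : Set X) ∩ r} = 𝒜.card := by
    rw [hset, Set.ncard_image_of_injective _ (fun a b h => by exact_mod_cast h),
      Set.ncard_coe_finset]
  rw [hcard]
  refine le_trans (Finset.card_le_card_shatterer 𝒜) ?_
  have hsub : 𝒜.shatterer ⊆ (Finset.range (d + 1)).biUnion (fun i => A.powersetCard i) := by
    intro s hs
    have hsh := Finset.mem_shatterer.1 hs
    -- s ⊆ A
    obtain ⟨u, hu, hsu⟩ := hsh (Finset.Subset.refl s)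
    have huA : u ⊆ A := by
      simp only [h𝒜, Finset.mem_filter, Finset.mem_powerset] at hu
      exact hu.1
    have hsA : s ⊆ A := fun x hx => huA (by
      have hx' : x ∈ s ∩ u := hsu.symm ▸ hx
      exact (Finset.mem_inter.1 hx').2)
    have hsd : s.card ≤ d := by
      apply hVC
      intro Y hY
      have : Y = ((s.filter (· ∈ Y) : Finset X) : Set X) := by
        ext x
        simp only [Finset.coe_filter, Set.mem_setOf_eq]
        exact ⟨fun h => ⟨hY h, h⟩, fun h => h.2⟩
      rw [this]
      obtain ⟨u', hu', hsu'⟩ := hsh (Finset.filter_subset (· ∈ Y) s)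
      simp only [h𝒜, Finset.mem_filter, Finset.mem_powerset] at hu'
      obtain ⟨hu'A, r, hr, hur⟩ := hu'
      refine ⟨r, hr, ?_⟩
      have : (s : Set X) ∩ r = (s : Set X) ∩ ((A : Set X) ∩ r) := by
        rw [← Set.inter_assoc, Set.inter_eq_left.2 (Finset.coe_subset.2 hsA)]
      rw [this, ← hur, ← Finset.coe_inter, hsu']
    simp only [Finset.mem_biUnion, Finset.mem_range, Finset.mem_powersetCard]
    exact ⟨s.card, Nat.lt_succ_of_le hsd, hsA, rfl⟩
  refine le_trans (Finset.card_le_card hsub) ?_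
  refine le_trans (Finset.card_biUnion_le) ?_
  apply Finset.sum_le_sum
  intro i _
  rw [Finset.card_powersetCard, hn]
end

section
/- Tight lower bound: there is a constant c > 0 such that for all a > 0, 0 < ε ≤ R < a/4, any (R, ε)-colander S for [0, a]² satisfies |S| ≥ c · a²/(R ε). -/
set_option maxHeartbeats 1000000

open Finset

noncomputable def pt (x y : ℝ) : EuclideanSpace ℝ (Fin 2) := !₂[x, y]

lemma pt0 (x y : ℝ) : pt x y 0 = x := rfl
lemma pt1 (x y : ℝ) : pt x y 1 = y := rfl

lemma dist_two (p q : EuclideanSpace ℝ (Fin 2)) :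
    dist p q = Real.sqrt ((p 0 - q 0)^2 + (p 1 - q 1)^2) := by
  rw [EuclideanSpace.dist_eq, Fin.sum_univ_two]
  simp [Real.dist_eq, sq_abs]

lemma dist_le_iff2 (p q : EuclideanSpace ℝ (Fin 2)) {R : ℝ} (hR : 0 ≤ R) :
    dist p q ≤ R ↔ (p 0 - q 0)^2 + (p 1 - q 1)^2 ≤ R^2 := by
  rw [dist_two, Real.sqrt_le_left hR]

lemma coord1_le (p q : EuclideanSpace ℝ (Fin 2)) : |p 1 - q 1| ≤ dist p q := by
  rw [dist_two, ← Real.sqrt_sq_eq_abs]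
  exact Real.sqrt_le_sqrt (by nlinarith [sq_nonneg (p 0 - q 0)])

/-- `S` is an `(R, ε)`-colander for `D`. -/
def IsColander (S : Set (EuclideanSpace ℝ (Fin 2))) (R ε : ℝ)
    (D : Set (EuclideanSpace ℝ (Fin 2))) : Prop :=
  ∀ q ∈ D, ∀ q' ∈ D,
    Metric.closedBall q R ∩ S = Metric.closedBall q' R ∩ S → dist q q' ≤ ε

lemma line_lb (S : Finset (EuclideanSpace ℝ (Fin 2))) (a R ε y₀ : ℝ)
    (hε : 0 < ε) (hεR : ε ≤ R) (hRa : R < a / 4)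
    (hy0 : 0 ≤ y₀) (hy1 : y₀ ≤ a)
    (hcol : IsColander (S : Set (EuclideanSpace ℝ (Fin 2))) R ε
      {p : EuclideanSpace ℝ (Fin 2) |
        p 0 ∈ Set.Icc (0 : ℝ) a ∧ p 1 ∈ Set.Icc (0 : ℝ) a}) :
    a / (8 * ε) ≤ ((S.filter (fun s => |s 1 - y₀| ≤ R)).card : ℝ) := by
  classical
  have hR : 0 < R := hε.trans_le hεR
  have ha : 0 < a := by linarith
  set T := S.filter (fun s => |s 1 - y₀| ≤ R) with hTdef
  set K := ⌊a / (2*ε)⌋₊ with hKdef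
  set P : ℕ → EuclideanSpace ℝ (Fin 2) := fun i => pt (2*ε*i) y₀ with hP
  have hKle : (K : ℝ) ≤ a / (2*ε) := Nat.floor_le (by positivity)
  have hKa : (K:ℝ) * (2*ε) ≤ a := (le_div_iff₀ (by positivity)).mp hKle
  have hmemD : ∀ i : ℕ, i ≤ K → P i ∈ {p : EuclideanSpace ℝ (Fin 2) |
      p 0 ∈ Set.Icc (0 : ℝ) a ∧ p 1 ∈ Set.Icc (0 : ℝ) a} := by
    intro i hi
    have hiK : (i:ℝ) ≤ K := by exact_mod_cast hi
    have c0 : P i 0 = 2*ε*(i:ℝ) := rfl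
    have c1 : P i 1 = y₀ := rfl
    simp only [Set.mem_setOf_eq, Set.mem_Icc, c0, c1]
    exact ⟨⟨by positivity, by nlinarith⟩, hy0, hy1⟩
  -- consecutive sample balls have different intersections with S
  have hne : ∀ i : ℕ, i + 1 ≤ K →
      Metric.closedBall (P i) R ∩ ↑S ≠ Metric.closedBall (P (i+1)) R ∩ ↑S := by
    intro i hi h
    have hd := hcol _ (hmemD i (by omega)) _ (hmemD (i+1) hi) h
    have e : dist (P i) (P (i+1)) = 2*ε := by
      have e2 : (P i 0 - P (i+1) 0)^2 + (P i 1 - P (i+1) 1)^2 = (2*ε)^2 := by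
        simp only [hP, pt0, pt1]
        push_cast
        ring
      rw [dist_two, e2, Real.sqrt_sq (by positivity)]
    rw [e] at hd
    linarith
  -- choose a witness point in the symmetric difference
  have hchoice : ∀ i : ℕ, i + 1 ≤ K → ∃ s ∈ S,
      ¬ (dist s (P i) ≤ R ↔ dist s (P (i+1)) ≤ R) := by
    intro i hi
    by_contra hcon
    push_neg at hcon
    apply hne i hi
    ext x
    simp only [Set.mem_inter_iff, Metric.mem_closedBall, Finset.mem_coe]
    constructor
    · rintro ⟨h1, h2⟩; exact ⟨(hcon x h2).mp h1, h2⟩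
    · rintro ⟨h1, h2⟩; exact ⟨(hcon x h2).mpr h1, h2⟩
  choose! f hfS hf using hchoice
  -- the witness lies in the strip
  have hfT : ∀ i : ℕ, i + 1 ≤ K → f i ∈ T := by
    intro i hi
    have h1 := hf i hi
    have : dist (f i) (P i) ≤ R ∨ dist (f i) (P (i+1)) ≤ R := by tauto
    rw [hTdef, Finset.mem_filter]
    refine ⟨hfS i hi, ?_⟩
    rcases this with h | h
    · have := (coord1_le (f i) (P i)).trans h
      simpa [hP, pt1] using this
    · have := (coord1_le (f i) (P (i+1))).trans h
      simpa [hP, pt1] using this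
  set g : ℕ → EuclideanSpace ℝ (Fin 2) × Bool :=
    fun i => (f i, if dist (f i) (P i) ≤ R then true else false) with hg
  have mono : ∀ m n : ℕ, m ≤ n → 2*ε*(m:ℝ) ≤ 2*ε*(n:ℝ) := by
    intro m n h
    have : (m:ℝ) ≤ n := by exact_mod_cast h
    nlinarith
  -- injectivity helper
  have main : ∀ i j : ℕ, i + 1 ≤ K → j + 1 ≤ K → i < j → g i = g j → False := by
    intro i j hi hj hij hgij
    have hfij : f i = f j := congrArg Prod.fst hgij
    have hbool : (dist (f i) (P i) ≤ R ↔ dist (f i) (P j) ≤ R) := by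
      have h3 := congrArg Prod.snd hgij
      simp only [hg] at h3
      rw [← hfij] at h3
      by_cases h1 : dist (f i) (P i) ≤ R <;> by_cases h2 : dist (f i) (P j) ≤ R <;>
        simp [h1, h2] at h3 ⊢
    have hsT : f i ∈ T := hfT i hi
    have hQ0 : 0 ≤ R^2 - (f i 1 - y₀)^2 := by
      rw [hTdef, Finset.mem_filter] at hsT
      have h5 := hsT.2
      have h2 : (f i 1 - y₀)^2 ≤ R^2 := by
        have h6 := abs_le.mp h5
        nlinarith
      linarith
    set r := Real.sqrt (R^2 - (f i 1 - y₀)^2) with hr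
    have key : ∀ k : ℕ, (dist (f i) (P k) ≤ R ↔
        (f i 0 - r ≤ 2*ε*k ∧ 2*ε*(k:ℝ) ≤ f i 0 + r)) := by
      intro k
      rw [dist_le_iff2 _ _ hR.le]
      have c0 : P k 0 = 2*ε*(k:ℝ) := rfl
      have c1 : P k 1 = y₀ := rfl
      rw [c0, c1]
      have h1 : (f i 0 - 2*ε*(k:ℝ))^2 + (f i 1 - y₀)^2 ≤ R^2 ↔
          (f i 0 - 2*ε*(k:ℝ))^2 ≤ R^2 - (f i 1 - y₀)^2 := by constructor <;> intro h <;> linarith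
      rw [h1]
      rw [show (f i 0 - 2*ε*(k:ℝ))^2 = |f i 0 - 2*ε*(k:ℝ)|^2 by rw [sq_abs]]
      rw [← Real.le_sqrt (abs_nonneg _) hQ0, ← hr, abs_le]
      constructor
      · rintro ⟨u, v⟩; constructor <;> linarith
      · rintro ⟨u, v⟩; constructor <;> linarith
    have hfi : ¬ (dist (f i) (P i) ≤ R ↔ dist (f i) (P (i+1)) ≤ R) := hf i hi
    have hfj : ¬ (dist (f i) (P j) ≤ R ↔ dist (f i) (P (j+1)) ≤ R) := by
      rw [hfij]; exact hf j hj
    have hBij : (dist (f i) (P i) ≤ R ↔ dist (f i) (P j) ≤ R) := hbool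
    have hmono1 : 2*ε*((i:ℝ)+1) ≤ 2*ε*(j:ℝ) := by
      have := mono (i+1) j hij
      push_cast at this
      linarith
    by_cases hA : dist (f i) (P i) ≤ R
    · -- A_i true, A_{i+1} false, A_j true
      have hAi1 : ¬ dist (f i) (P (i+1)) ≤ R := by tauto
      have hAj : dist (f i) (P j) ≤ R := hBij.mp hA
      rw [key] at hA hAj
      rw [key, not_and_or, not_le, not_le] at hAi1
      push_cast at hA hAj hAi1
      rcases hAi1 with h | h
      · linarith [hA.1]
      · linarith [hAj.2]
    · -- A_i false, A_{i+1} true, A_j false, A_{j+1} true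
      have hAi1 : dist (f i) (P (i+1)) ≤ R := by tauto
      have hAj : ¬ dist (f i) (P j) ≤ R := fun h => hA (hBij.mpr h)
      have hAj1 : dist (f i) (P (j+1)) ≤ R := by tauto
      rw [key] at hAi1 hAj1
      rw [key, not_and_or, not_le, not_le] at hAj
      push_cast at hAi1 hAj1 hAj
      rcases hAj with h | h
      · linarith [hAi1.1, hmono1]
      · linarith [hAj1.2]
  -- counting
  have hcard : K ≤ 2 * T.card := by
    have hmem : ∀ i ∈ Finset.range K, g i ∈ T ×ˢ (Finset.univ : Finset Bool) := by
      intro i hi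
      rw [Finset.mem_range] at hi
      exact Finset.mem_product.mpr ⟨hfT i hi, Finset.mem_univ _⟩
    have hinj : Set.InjOn g (Finset.range K) := by
      intro i hi j hj hgij
      rw [Finset.coe_range, Set.mem_Iio] at hi hj
      rcases lt_trichotomy i j with h | h | h
      · exact absurd hgij (fun hq => (main i j hi hj h hq).elim)
      · exact h
      · exact absurd hgij.symm (fun hq => (main j i hj hi h hq).elim)
    have := Finset.card_le_card_of_injOn g hmem hinj
    simpa [Finset.card_product, mul_comm] using this
  -- arithmetic wrap-up
  have h1 : a/(2*ε) < (K:ℝ) + 1 := Nat.lt_floor_add_one _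
  have h4a : 4*ε ≤ a := by linarith
  have h2 : 1 ≤ a/(4*ε) := (one_le_div (by positivity)).mpr h4a
  have hKr : (K:ℝ) ≤ 2 * (T.card:ℝ) := by exact_mod_cast hcard
  have e1 : a/(2*ε) = 4 * (a/(8*ε)) := by field_simp; ring
  have e2 : a/(4*ε) = 2 * (a/(8*ε)) := by field_simp; ring
  rw [e1] at h1
  rw [e2] at h2
  linarith

/-- Tight lower bound: there is `c > 0` such that for all `a > 0` and
`0 < ε ≤ R < a/4`, any finite `(R, ε)`-colander for `[0,a]²` has at least
`c · a²/(R ε)` points. -/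
theorem stmt_18 :
    ∃ c > (0 : ℝ), ∀ (a R ε : ℝ) (S : Finset (EuclideanSpace ℝ (Fin 2))),
      0 < a → 0 < ε → ε ≤ R → R < a / 4 →
      IsColander (S : Set (EuclideanSpace ℝ (Fin 2))) R ε
        {p : EuclideanSpace ℝ (Fin 2) |
          p 0 ∈ Set.Icc (0 : ℝ) a ∧ p 1 ∈ Set.Icc (0 : ℝ) a} →
      c * (a ^ 2 / (R * ε)) ≤ (S.card : ℝ) := by
  classical
  refine ⟨1/24, by norm_num, ?_⟩
  intro a R ε S ha hε hεR hRa hcol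
  have hR : 0 < R := hε.trans_le hεR
  set M := ⌊a / (3*R)⌋₊ with hM
  set T : ℕ → Finset (EuclideanSpace ℝ (Fin 2)) :=
    fun j => S.filter (fun s => |s 1 - 3*R*j| ≤ R) with hT
  have hMle : (M:ℝ) ≤ a/(3*R) := Nat.floor_le (by positivity)
  have hline : ∀ j : ℕ, j ≤ M → a/(8*ε) ≤ ((T j).card : ℝ) := by
    intro j hj
    apply line_lb S a R ε (3*R*j) hε hεR hRa (by positivity) ?_ hcol
    have hjM : (j:ℝ) ≤ M := by exact_mod_cast hj
    have := (le_div_iff₀ (by positivity : (0:ℝ) < 3*R)).mp hMle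
    nlinarith
  have hdisj : ∀ j ∈ Finset.range (M+1), ∀ j' ∈ Finset.range (M+1),
      j ≠ j' → Disjoint (T j) (T j') := by
    intro j _ j' _ hjj'
    rw [Finset.disjoint_left]
    intro s hsj hsj'
    rw [hT] at hsj hsj'
    simp only [Finset.mem_filter] at hsj hsj'
    have h1 := abs_le.mp hsj.2
    have h2 := abs_le.mp hsj'.2
    rcases lt_or_gt_of_ne hjj' with h | h
    · have : (j:ℝ) + 1 ≤ j' := by exact_mod_cast h
      nlinarith [h1.1, h1.2, h2.1, h2.2]
    · have : (j':ℝ) + 1 ≤ j := by exact_mod_cast h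
      nlinarith [h1.1, h1.2, h2.1, h2.2]
  have hsum : ∑ j ∈ Finset.range (M+1), (T j).card ≤ S.card := by
    rw [← Finset.card_biUnion hdisj]
    apply Finset.card_le_card
    apply Finset.biUnion_subset.mpr
    intro j _
    exact Finset.filter_subset _ _
  have h1 : ((M:ℝ)+1) * (a/(8*ε)) ≤ (S.card : ℝ) := by
    have step : ((M:ℝ)+1) * (a/(8*ε)) ≤ ∑ j ∈ Finset.range (M+1), ((T j).card : ℝ) := by
      have := Finset.sum_le_sum (f := fun _ : ℕ => a/(8*ε)) (g := fun j => ((T j).card : ℝ))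
        (s := Finset.range (M+1)) ?_
      · simpa [mul_comm] using this
      · intro j hj
        rw [Finset.mem_range] at hj
        exact hline j (by omega)
    calc ((M:ℝ)+1) * (a/(8*ε)) ≤ ∑ j ∈ Finset.range (M+1), ((T j).card : ℝ) := step
      _ = ((∑ j ∈ Finset.range (M+1), (T j).card : ℕ) : ℝ) := by push_cast; rfl
      _ ≤ (S.card : ℝ) := by exact_mod_cast hsum
  have h2 : a/(3*R) ≤ (M:ℝ) + 1 := (Nat.lt_floor_add_one _).le
  have h3 : (a/(3*R)) * (a/(8*ε)) ≤ ((M:ℝ)+1) * (a/(8*ε)) :=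
    mul_le_mul_of_nonneg_right h2 (by positivity)
  calc (1/24 : ℝ) * (a^2/(R*ε)) = (a/(3*R)) * (a/(8*ε)) := by field_simp; ring
    _ ≤ ((M:ℝ)+1) * (a/(8*ε)) := h3
    _ ≤ (S.card : ℝ) := h1
end
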